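/- Let R = F_p[Z/pZ] ≅ F_p[τ]/(τ^p) and let φ : M → N be an R-linear map between finite rank free R-modules. Let φ̄ : M/τM → N/τN be the induced F_p-linear map. Then dim_{F_p} im(φ) ≥ p · dim_{F_p} im(φ̄) and dim_{F_p} ker(φ) ≤ p · dim_{F_p} ker(φ̄). -/

import Mathlib

set_option synthInstance.maxHeartbeats 1000000
set_option maxHeartbeats 1000000
set_option linter.unusedSectionVars false
open Polynomial Module

/-- `R = F_p[τ]/(τ^p)`, the group algebra of `Z/pZ` over `F_p`. -/
abbrev TruncPolyRing (p : ℕ) : Type :=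
  Polynomial (ZMod p) ⧸ Ideal.span {(X : Polynomial (ZMod p)) ^ p}

/-- The element `τ` of `F_p[τ]/(τ^p)`. -/
noncomputable def tauElem (p : ℕ) : TruncPolyRing p :=
  Ideal.Quotient.mk (Ideal.span {(X : Polynomial (ZMod p)) ^ p}) X

section Aux

variable (p : ℕ) [hp : Fact p.Prime]

/-- Power basis for the truncated polynomial ring. -/
noncomputable def truncPB : PowerBasis (ZMod p) (TruncPolyRing p) :=
  AdjoinRoot.powerBasis' (monic_X.pow p)

instance : Module.Finite (ZMod p) (TruncPolyRing p) :=
  Module.Finite.of_basis (truncPB p).basis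

lemma finrank_truncPolyRing : finrank (ZMod p) (TruncPolyRing p) = p := by
  rw [(truncPB p).finrank]
  simp [truncPB, AdjoinRoot.powerBasis']

lemma tau_pow_p : tauElem p ^ p = 0 := by
  rw [tauElem, ← map_pow, Ideal.Quotient.eq_zero_iff_mem]
  exact Ideal.subset_span rfl

lemma tau_pow_eq_zero {k : ℕ} (hk : p ≤ k) : tauElem p ^ k = 0 := by
  obtain ⟨j, rfl⟩ := Nat.exists_eq_add_of_le hk
  rw [pow_add, tau_pow_p, zero_mul]

lemma mem_span_tau_of_mul {a : TruncPolyRing p}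
    (h : tauElem p ^ (p - 1) * a = 0) : a ∈ Ideal.span {tauElem p} := by
  obtain ⟨f, rfl⟩ := Ideal.Quotient.mk_surjective a
  rw [tauElem, ← map_pow, ← map_mul, Ideal.Quotient.eq_zero_iff_mem,
    Ideal.mem_span_singleton] at h
  obtain ⟨g, hg⟩ := h
  have hpp : p - 1 + 1 = p := Nat.succ_pred_eq_of_pos hp.out.pos
  have hcalc : (X : Polynomial (ZMod p)) ^ (p - 1) * f = X ^ (p - 1) * (X * g) := by
    rw [hg, show (X : Polynomial (ZMod p)) ^ p = X ^ (p - 1) * X from by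
      rw [← pow_succ, hpp]]; ring
  have hf : f = X * g := mul_left_cancel₀ (pow_ne_zero _ X_ne_zero) hcalc
  rw [Ideal.mem_span_singleton]
  exact ⟨Ideal.Quotient.mk _ g, by rw [hf, map_mul, tauElem]⟩

lemma eq_zero_of_algebraMap_mem_span_tau {c : ZMod p}
    (h : algebraMap (ZMod p) (TruncPolyRing p) c ∈ Ideal.span {tauElem p}) : c = 0 := by
  rw [Ideal.mem_span_singleton] at h
  obtain ⟨b, hb⟩ := h
  obtain ⟨g, rfl⟩ := Ideal.Quotient.mk_surjective b
  have hmk : Ideal.Quotient.mk (Ideal.span {(X : Polynomial (ZMod p)) ^ p}) (C c) =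
      Ideal.Quotient.mk _ (X * g) := by
    rw [map_mul, ← tauElem, ← hb, ← Ideal.Quotient.mk_algebraMap]
    simp [algebraMap_eq]
  rw [Ideal.Quotient.eq, Ideal.mem_span_singleton] at hmk
  obtain ⟨h, hh⟩ := hmk
  have := congrArg (Polynomial.eval 0) hh
  simpa [hp.out.pos.ne'] using this

lemma mem_tauSMul_top_iff {n : ℕ} (z : Fin n → TruncPolyRing p) :
    z ∈ (Ideal.span {tauElem p} •
        (⊤ : Submodule (TruncPolyRing p) (Fin n → TruncPolyRing p))) ↔
      ∃ y, z = tauElem p • y := by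
  constructor
  · intro hz
    refine Submodule.smul_induction_on hz ?_ ?_
    · intro r hr u _
      obtain ⟨c, rfl⟩ := Ideal.mem_span_singleton.mp hr
      exact ⟨c • u, mul_smul _ _ _⟩
    · rintro x y ⟨a, rfl⟩ ⟨b, rfl⟩
      exact ⟨a + b, by rw [smul_add]⟩
  · rintro ⟨y, rfl⟩
    exact Submodule.smul_mem_smul (Ideal.subset_span rfl) trivial

lemma mem_tauSMul_top_of_ann {n : ℕ} {z : Fin n → TruncPolyRing p}
    (h : tauElem p ^ (p - 1) • z = 0) :
    z ∈ (Ideal.span {tauElem p} •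
        (⊤ : Submodule (TruncPolyRing p) (Fin n → TruncPolyRing p))) := by
  rw [mem_tauSMul_top_iff]
  have hc : ∀ i, ∃ c, z i = tauElem p * c := by
    intro i
    have hzi : tauElem p ^ (p - 1) * z i = 0 := congrFun h i
    exact Ideal.mem_span_singleton.mp (mem_span_tau_of_mul p hzi)
  exact ⟨fun i => (hc i).choose, funext fun i => (hc i).choose_spec⟩

end Aux

set_option maxHeartbeats 8000000
set_option synthInstance.maxHeartbeats 2000000

/-- The modular lemma: for `R = F_p[Z/pZ] ≅ F_p[τ]/(τ^p)` and an `R`-linear map `φ` between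
finite rank free `R`-modules, with `φ̄` the induced `F_p`-linear map `M/τM → N/τN`, one has
`dim_{F_p} im(φ) ≥ p · dim_{F_p} im(φ̄)` and `dim_{F_p} ker(φ) ≤ p · dim_{F_p} ker(φ̄)`. -/
theorem modular_lemma (p : ℕ) [Fact p.Prime] (m n : ℕ)
    (φ : (Fin m → TruncPolyRing p) →ₗ[TruncPolyRing p] (Fin n → TruncPolyRing p))
    (φbar :
      ((Fin m → TruncPolyRing p) ⧸
        (Ideal.span {tauElem p} • (⊤ : Submodule (TruncPolyRing p) (Fin m → TruncPolyRing p))))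
      →ₗ[TruncPolyRing p]
      ((Fin n → TruncPolyRing p) ⧸
        (Ideal.span {tauElem p} • (⊤ : Submodule (TruncPolyRing p) (Fin n → TruncPolyRing p)))))
    (hcompat : ∀ x, φbar (Submodule.Quotient.mk x) = Submodule.Quotient.mk (φ x)) :
    p * finrank (ZMod p) ↥((LinearMap.range φbar).restrictScalars (ZMod p)) ≤
      finrank (ZMod p) ↥((LinearMap.range φ).restrictScalars (ZMod p)) ∧
    finrank (ZMod p) ↥((LinearMap.ker φ).restrictScalars (ZMod p)) ≤
      p * finrank (ZMod p) ↥((LinearMap.ker φbar).restrictScalars (ZMod p)) := by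
  classical
  have hppos : 0 < p := (Fact.out : p.Prime).pos
  -- Finiteness instances
  haveI hfinM : Module.Finite (ZMod p) (Fin m → TruncPolyRing p) := inferInstance
  haveI hfinN : Module.Finite (ZMod p) (Fin n → TruncPolyRing p) := inferInstance
  haveI hfinQM : Module.Finite (ZMod p)
      ((Fin m → TruncPolyRing p) ⧸
        (Ideal.span {tauElem p} • (⊤ : Submodule (TruncPolyRing p) (Fin m → TruncPolyRing p)))) :=
    Module.Finite.trans (TruncPolyRing p) _
  haveI hfinQN : Module.Finite (ZMod p)
      ((Fin n → TruncPolyRing p) ⧸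
        (Ideal.span {tauElem p} • (⊤ : Submodule (TruncPolyRing p) (Fin n → TruncPolyRing p)))) :=
    Module.Finite.trans (TruncPolyRing p) _
  set Wbar := (LinearMap.range φbar).restrictScalars (ZMod p) with hWbar
  set W := (LinearMap.range φ).restrictScalars (ZMod p) with hW
  set r := finrank (ZMod p) Wbar with hr
  let b : Basis (Fin r) (ZMod p) Wbar := Module.finBasis (ZMod p) Wbar
  have hw : ∀ i : Fin r, ∃ w : Fin n → TruncPolyRing p, w ∈ LinearMap.range φ ∧
      (Submodule.Quotient.mk w :
        (Fin n → TruncPolyRing p) ⧸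
        (Ideal.span {tauElem p} • (⊤ : Submodule (TruncPolyRing p) (Fin n → TruncPolyRing p))))
        = (b i : _) := by
    intro i
    obtain ⟨xbar, hx⟩ := (b i).2
    obtain ⟨x, rfl⟩ := Submodule.Quotient.mk_surjective _ xbar
    exact ⟨φ x, ⟨x, rfl⟩, by rw [← hcompat x, hx]⟩
  choose w hwmem hwmk using hw
  set QN : Type := (Fin n → TruncPolyRing p) ⧸
      (Ideal.span {tauElem p} • (⊤ : Submodule (TruncPolyRing p) (Fin n → TruncPolyRing p)))
    with hQN
  set mkN : (Fin n → TruncPolyRing p) →ₗ[ZMod p] QN :=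
      (Submodule.mkQ (Ideal.span {tauElem p} •
        (⊤ : Submodule (TruncPolyRing p) (Fin n → TruncPolyRing p)))).restrictScalars (ZMod p)
    with hmkN
  -- the key linear independence
  have hLI : LinearIndependent (ZMod p)
      (fun ji : Fin p × Fin r => (tauElem p ^ (ji.1 : ℕ)) • w ji.2) := by
    rw [Fintype.linearIndependent_iff]
    intro g hg
    suffices H : ∀ k : ℕ, ∀ j : Fin p, (j : ℕ) = k → ∀ i, g (j, i) = 0 by
      rintro ⟨j, i⟩; exact H j j rfl i
    intro k
    induction k using Nat.strong_induction_on with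
    | _ k IH =>
    rintro j rfl i
    have hjlt : (j : ℕ) < p := j.isLt
    have hprev : ∀ j' : Fin p, (j' : ℕ) < (j : ℕ) → ∀ i', g (j', i') = 0 :=
      fun j' hj' i' => IH j' hj' j' rfl i'
    have key : (tauElem p ^ (p - 1)) • (∑ i', g (j, i') • w i') = 0 := by
      have h0 := congrArg (fun z => (tauElem p ^ (p - 1 - (j : ℕ))) • z) hg
      simp only [smul_zero] at h0
      rw [Finset.smul_sum] at h0
      have hterm : ∀ ji : Fin p × Fin r,
          (tauElem p ^ (p - 1 - (j : ℕ))) • (g ji • ((tauElem p ^ (ji.1 : ℕ)) • w ji.2)) =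
          if ji.1 = j then g (j, ji.2) • ((tauElem p ^ (p - 1)) • w ji.2) else 0 := by
        rintro ⟨j', i'⟩
        rcases lt_trichotomy (j' : ℕ) (j : ℕ) with hlt | heq | hgt
        · rw [hprev j' hlt]
          rw [if_neg (by exact fun hc => absurd (congrArg Fin.val hc) (Nat.ne_of_lt hlt))]
          simp
        · have hj'j : j' = j := Fin.ext heq
          subst hj'j
          rw [if_pos rfl, smul_comm,
            smul_smul (tauElem p ^ (p - 1 - (j' : ℕ))) (tauElem p ^ (j' : ℕ)) (w i'), ← pow_add]
          congr 3
          omega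
        · rw [if_neg (by exact fun hc => absurd (congrArg Fin.val hc) (Nat.ne_of_gt hgt))]
          rw [smul_comm,
            smul_smul (tauElem p ^ (p - 1 - (j : ℕ))) (tauElem p ^ (j' : ℕ)) (w i'), ← pow_add,
            tau_pow_eq_zero p (by omega), zero_smul (TruncPolyRing p) (w i'), smul_zero]
      rw [Finset.sum_congr rfl (fun ji _ => hterm ji)] at h0
      rw [Fintype.sum_prod_type] at h0
      rw [Finset.smul_sum]
      rw [← h0]
      rw [Finset.sum_comm]
      refine Finset.sum_congr rfl fun i' _ => ?_
      rw [Finset.sum_ite_eq' Finset.univ j (fun _ => g (j, i') • ((tauElem p ^ (p - 1)) • w i'))]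
      rw [if_pos (Finset.mem_univ j)]
      rw [smul_comm]
    have hmem := mem_tauSMul_top_of_ann p key
    have hq0 : mkN (∑ i', g (j, i') • w i') = 0 :=
      (Submodule.Quotient.mk_eq_zero _).mpr hmem
    have hpush : mkN (∑ i', g (j, i') • w i') = ∑ i', g (j, i') • ((b i' : Wbar) : QN) := by
      rw [map_sum]
      refine Finset.sum_congr rfl fun i' _ => ?_
      rw [map_smul]
      congr 1
      exact hwmk i'
    have hzero : (∑ i', g (j, i') • b i' : Wbar) = 0 := by
      have hval : ((∑ i', g (j, i') • b i' : Wbar) : QN) = 0 := by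
        rw [AddSubmonoidClass.coe_finset_sum]
        simp only [Submodule.coe_smul]
        rw [← hpush]
        exact hq0
      exact Subtype.ext hval
    exact Fintype.linearIndependent_iff.mp b.linearIndependent _ hzero i
  -- part 1
  have hmemW : ∀ ji : Fin p × Fin r, (tauElem p ^ (ji.1 : ℕ)) • w ji.2 ∈ W :=
    fun ji => Submodule.smul_mem (LinearMap.range φ) _ (hwmem ji.2)
  have hLI' : LinearIndependent (ZMod p)
      (fun ji : Fin p × Fin r => (⟨_, hmemW ji⟩ : W)) :=
    hLI.of_comp W.subtype
  have h1 : p * r ≤ finrank (ZMod p) W := by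
    simpa [Fintype.card_prod] using hLI'.fintype_card_le_finrank
  refine ⟨h1, ?_⟩
  -- rank-nullity
  have e1 : LinearMap.range (φ.restrictScalars (ZMod p)) = W := rfl
  have e2 : LinearMap.ker (φ.restrictScalars (ZMod p)) =
      (LinearMap.ker φ).restrictScalars (ZMod p) := rfl
  have e3 : LinearMap.range (φbar.restrictScalars (ZMod p)) = Wbar := rfl
  have e4 : LinearMap.ker (φbar.restrictScalars (ZMod p)) =
      (LinearMap.ker φbar).restrictScalars (ZMod p) := rfl
  have hrk1 := LinearMap.finrank_range_add_finrank_ker (φ.restrictScalars (ZMod p))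
  have hrk2 := LinearMap.finrank_range_add_finrank_ker (φbar.restrictScalars (ZMod p))
  rw [e1, e2] at hrk1
  rw [e3, e4] at hrk2
  have hfinM' : finrank (ZMod p) (Fin m → TruncPolyRing p) = m * p := by
    rw [Module.finrank_pi_fintype]
    simp [finrank_truncPolyRing]
  rw [hfinM'] at hrk1
  -- lower bound on dim of the quotient of M
  set QM : Type := (Fin m → TruncPolyRing p) ⧸
      (Ideal.span {tauElem p} • (⊤ : Submodule (TruncPolyRing p) (Fin m → TruncPolyRing p)))
    with hQM
  set mkM : (Fin m → TruncPolyRing p) →ₗ[ZMod p] QM :=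
      (Submodule.mkQ (Ideal.span {tauElem p} •
        (⊤ : Submodule (TruncPolyRing p) (Fin m → TruncPolyRing p)))).restrictScalars (ZMod p)
    with hmkM
  have hsingle : LinearIndependent (ZMod p)
      (fun i : Fin m => (Submodule.Quotient.mk (Pi.single i (1 : TruncPolyRing p)) : QM)) := by
    rw [Fintype.linearIndependent_iff]
    intro g hg i
    have hmk : mkM (∑ i', g i' •
        (Pi.single i' (1 : TruncPolyRing p) : Fin m → TruncPolyRing p)) = 0 := by
      rw [map_sum, ← hg]
      exact Finset.sum_congr rfl fun i' _ => by rw [map_smul]; rfl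
    have hmem := (Submodule.Quotient.mk_eq_zero _).mp hmk
    obtain ⟨y, hy⟩ := (mem_tauSMul_top_iff p _).mp hmem
    have hyi := congrFun hy i
    rw [Finset.sum_apply] at hyi
    have hsum : ∀ i' : Fin m,
        (g i' • (Pi.single i' (1 : TruncPolyRing p) : Fin m → TruncPolyRing p)) i
          = if i = i' then g i' • (1 : TruncPolyRing p) else 0 := by
      intro i'
      rw [Pi.smul_apply, Pi.single_apply]
      split <;> simp
    rw [Finset.sum_congr rfl (fun i' _ => hsum i'), Finset.sum_ite_eq Finset.univ i
      (fun i' => g i' • (1 : TruncPolyRing p)), if_pos (Finset.mem_univ i)] at hyi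
    have halg : algebraMap (ZMod p) (TruncPolyRing p) (g i) ∈ Ideal.span {tauElem p} := by
      rw [Algebra.algebraMap_eq_smul_one, hyi]
      exact Ideal.mem_span_singleton.mpr ⟨y i, rfl⟩
    exact eq_zero_of_algebraMap_mem_span_tau p halg
  have hqm : m ≤ finrank (ZMod p) QM := by
    simpa using hsingle.fintype_card_le_finrank
  -- arithmetic
  have c1 : p * r + finrank (ZMod p) ((LinearMap.ker φ).restrictScalars (ZMod p)) ≤ m * p := by
    rw [← hrk1]; exact Nat.add_le_add_right h1 _
  have c2 : m * p ≤ p * finrank (ZMod p) QM := by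
    rw [mul_comm m p]; exact Nat.mul_le_mul_left p hqm
  have c3 : p * finrank (ZMod p) QM
      = p * r + p * finrank (ZMod p) ((LinearMap.ker φbar).restrictScalars (ZMod p)) := by
    rw [← hrk2, mul_add]
  exact le_of_add_le_add_left ((c1.trans c2).trans_eq c3)
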